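/- Let 0 < α ≤ 1. Then Γ(3/2 − α) = √π · Γ(2 − α) if and only if α = 1. Consequently, for x > 0 the two expressions x^{1−α}/Γ(2−α) (the fractional derivative D^α of x = (x^{1/2})², computed by the power rule) and √π · x^{1−α}/Γ(3/2 − α) (the value 2 x^{1/2} D^α(x^{1/2}) produced by Jumarie's product rule D^α(fg) = g D^α f + f D^α g with f = g = x^{1/2}) agree only when α = 1. -/

import Mathlib

open MeasureTheory Real intervalIntegral

noncomputable def betaI (β : ℝ) : ℝ :=
  ∫ x in (0:ℝ)..1, x ^ (β - 1/2) * (1 - x) ^ (-(1/2) : ℝ)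

lemma ptwise (β x : ℝ) (hx0 : 0 ≤ x) (hx1 : x ≤ 1) :
    (x : ℂ) ^ ((β : ℂ) + 1/2 - 1) * (1 - (x : ℂ)) ^ ((1:ℂ)/2 - 1)
      = ((x ^ (β - 1/2) * (1 - x) ^ (-(1/2) : ℝ) : ℝ) : ℂ) := by
  have hx1' : (0:ℝ) ≤ 1 - x := by linarith
  rw [Complex.ofReal_mul, Complex.ofReal_cpow hx0, Complex.ofReal_cpow hx1']
  push_cast
  ring_nf

lemma beta_cpx (β : ℝ) :
    Complex.betaIntegral ((β : ℂ) + 1/2) (1/2) = (betaI β : ℂ) := by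
  rw [Complex.betaIntegral, betaI, ← intervalIntegral.integral_ofReal]
  refine intervalIntegral.integral_congr fun x hx => ?_
  rw [Set.uIcc_of_le (by norm_num : (0:ℝ) ≤ 1)] at hx
  exact ptwise β x hx.1 hx.2

lemma gamma_betaI (β : ℝ) (hβ : 0 ≤ β) :
    Real.Gamma (β + 1/2) * Real.Gamma (1/2) = Real.Gamma (β + 1) * betaI β := by
  have h := Complex.Gamma_mul_Gamma_eq_betaIntegral (s := (β : ℂ) + 1/2) (t := 1/2)
    (by simp; positivity) (by norm_num)
  rw [beta_cpx β] at h
  have h2 : ((β : ℂ) + 1/2 + 1/2) = ((β + 1 : ℝ) : ℂ) := by push_cast; ring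
  rw [h2] at h
  have h3 : ((β : ℂ) + 1/2) = ((β + 1/2 : ℝ) : ℂ) := by push_cast; ring
  rw [h3, Complex.Gamma_ofReal, Complex.Gamma_ofReal,
    show ((1:ℂ)/2) = ((1/2 : ℝ) : ℂ) by push_cast; ring,
    Complex.Gamma_ofReal, ← Complex.ofReal_mul, ← Complex.ofReal_mul] at h
  exact_mod_cast h

lemma integrable_f (β : ℝ) (hβ : 0 ≤ β) :
    IntervalIntegrable (fun x : ℝ => x ^ (β - 1/2) * (1 - x) ^ (-(1/2) : ℝ)) volume 0 1 := by
  have h := Complex.betaIntegral_convergent (u := (β : ℂ) + 1/2) (v := 1/2)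
    (by simp; positivity) (by norm_num)
  have hre : IntervalIntegrable
      (fun x : ℝ => ((x : ℂ) ^ ((β : ℂ) + 1/2 - 1) * (1 - (x : ℂ)) ^ ((1:ℂ)/2 - 1)).re)
      volume 0 1 := ⟨h.1.re, h.2.re⟩
  refine hre.congr_ae ?_
  rw [Set.uIoc_of_le (by norm_num : (0:ℝ) ≤ 1)]
  refine (ae_restrict_iff' measurableSet_Ioc).mpr (Filter.Eventually.of_forall fun x hx => ?_)
  show (_ * _ : ℂ).re = _
  rw [ptwise β x hx.1.le hx.2, Complex.ofReal_re]

lemma key {β : ℝ} (hβ : 0 < β) :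
    Real.Gamma (β + 1/2) < Real.sqrt Real.pi * Real.Gamma (β + 1) := by
  have hI0 : betaI 0 = Real.pi := by
    have h := gamma_betaI 0 le_rfl
    rw [zero_add, zero_add, Real.Gamma_one, Real.Gamma_one_half_eq, one_mul,
      Real.mul_self_sqrt Real.pi_pos.le] at h
    exact h.symm
  have hlt : betaI β < betaI 0 := by
    have hpos : 0 < betaI 0 - betaI β := by
      rw [betaI, betaI, ← intervalIntegral.integral_sub (integrable_f 0 le_rfl) (integrable_f β hβ.le)]
      refine intervalIntegral.intervalIntegral_pos_of_pos_on
        ((integrable_f 0 le_rfl).sub (integrable_f β hβ.le)) (fun x hx => ?_) one_pos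
      have h1x : (0:ℝ) < 1 - x := by linarith [hx.2]
      have : x ^ (β - 1/2) < x ^ ((0:ℝ) - 1/2) :=
        Real.rpow_lt_rpow_of_exponent_gt hx.1 hx.2 (by linarith)
      have h2 : 0 < (1 - x) ^ (-(1/2) : ℝ) := Real.rpow_pos_of_pos h1x _
      nlinarith
    linarith
  have h := gamma_betaI β hβ.le
  rw [Real.Gamma_one_half_eq] at h
  have hG : 0 < Real.Gamma (β + 1) := Real.Gamma_pos_of_pos (by linarith)
  have hsp : 0 < Real.sqrt Real.pi := Real.sqrt_pos.mpr Real.pi_pos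
  have : Real.Gamma (β + 1/2) * Real.sqrt Real.pi
      < (Real.sqrt Real.pi * Real.Gamma (β + 1)) * Real.sqrt Real.pi := by
    rw [h]
    have hππ : Real.sqrt Real.pi * Real.sqrt Real.pi = Real.pi :=
      Real.mul_self_sqrt Real.pi_pos.le
    nlinarith [hlt, hI0, hG]
  exact lt_of_mul_lt_mul_right this hsp.le

/-- For `0 < α ≤ 1`: `Γ(3/2 - α) = √π Γ(2 - α)` iff `α = 1`; consequently, for
`x > 0`, `x^{1-α}/Γ(2-α) = √π x^{1-α}/Γ(3/2-α)` iff `α = 1` (failure of Jumarie's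
product rule). -/
theorem product_rule_fails (α : ℝ) (hα0 : 0 < α) (hα1 : α ≤ 1) :
    (Real.Gamma (3/2 - α) = Real.sqrt Real.pi * Real.Gamma (2 - α) ↔ α = 1) ∧
    (∀ x : ℝ, 0 < x →
      (x ^ (1 - α) / Real.Gamma (2 - α) =
        Real.sqrt Real.pi * x ^ (1 - α) / Real.Gamma (3/2 - α) ↔ α = 1)) := by
  have main : Real.Gamma (3/2 - α) = Real.sqrt Real.pi * Real.Gamma (2 - α) ↔ α = 1 := by
    constructor
    · intro h
      by_contra hne
      have hlt : α < 1 := lt_of_le_of_ne hα1 hne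
      have hk := key (β := 1 - α) (by linarith)
      rw [show (1 - α) + 1/2 = 3/2 - α by ring, show (1 - α) + 1 = 2 - α by ring] at hk
      exact absurd h (ne_of_lt hk)
    · rintro rfl
      rw [show (3/2 - 1 : ℝ) = 1/2 by norm_num, show (2 - 1 : ℝ) = 1 by norm_num,
        Real.Gamma_one, Real.Gamma_one_half_eq, mul_one]
  refine ⟨main, fun x hx => ?_⟩
  have hxp : 0 < x ^ (1 - α) := Real.rpow_pos_of_pos hx _
  have hG2 : 0 < Real.Gamma (2 - α) := Real.Gamma_pos_of_pos (by linarith)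
  have hG3 : 0 < Real.Gamma (3/2 - α) := Real.Gamma_pos_of_pos (by linarith)
  rw [div_eq_div_iff hG2.ne' hG3.ne',
    show Real.sqrt Real.pi * x ^ (1 - α) * Real.Gamma (2 - α)
      = x ^ (1 - α) * (Real.sqrt Real.pi * Real.Gamma (2 - α)) by ring,
    mul_right_inj' hxp.ne']
  exact main
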